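/- Let K be a generalized curvature tensor on a finite-dimensional real inner product space V and let B be a self-adjoint endomorphism that is K-compatible. If X, Y, Z are eigenvectors of B with eigenvalues λ, μ, ν such that λ ≠ ν and μ ≠ ν, then K(X,Y,Z,W) = 0 for all W ∈ V. -/
import Mathlib


open RealInnerProductSpace

/-- Extended Derdzinski–Shen theorem: if `K` is a generalized curvature tensor, `B` a
self-adjoint `K`-compatible endomorphism, and `X, Y, Z` are eigenvectors of `B` with
eigenvalues `λ, μ, ν` such that `λ ≠ ν` and `μ ≠ ν`, then `K(X,Y,Z,W) = 0` for all `W`. -/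
theorem derdzinski_shen_extended
    {V : Type*} [NormedAddCommGroup V] [InnerProductSpace ℝ V] [FiniteDimensional ℝ V]
    (K : V →ₗ[ℝ] V →ₗ[ℝ] V →ₗ[ℝ] V →ₗ[ℝ] ℝ)
    (hanti1 : ∀ X Y Z W : V, K X Y Z W = - K Y X Z W)
    (hanti2 : ∀ X Y Z W : V, K X Y Z W = - K X Y W Z)
    (hpair : ∀ X Y Z W : V, K X Y Z W = K Z W X Y)
    (hbianchi : ∀ X Y Z W : V, K X Y Z W + K Y Z X W + K Z X Y W = 0)
    (B : V →ₗ[ℝ] V)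
    (hB : ∀ X Y : V, ⟪B X, Y⟫ = ⟪X, B Y⟫)
    (hcompat : ∀ X Y Z W : V, K (B X) Y Z W + K (B Y) Z X W + K (B Z) X Y W = 0)
    (X Y Z : V) (lam mu nu : ℝ)
    (hX : B X = lam • X) (hY : B Y = mu • Y) (hZ : B Z = nu • Z)
    (hln : lam ≠ nu) (hmn : mu ≠ nu) :
    ∀ W : V, K X Y Z W = 0 := by
  intro W
  set a := K X Y Z W with ha
  set b := K Y Z X W with hb
  set c := K Z X Y W with hc
  -- Bianchi
  have h1 : a + b + c = 0 := hbianchi X Y Z W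
  -- compatibility at (X, Y, Z)
  have h2 : lam * a + mu * b + nu * c = 0 := by
    have := hcompat X Y Z W
    rw [hX, hY, hZ] at this
    simpa [map_smul, smul_eq_mul] using this
  -- compatibility at (X, Z, Y)
  have h3 : mu * a + nu * b + lam * c = 0 := by
    have := hcompat X Z Y W
    rw [hX, hY, hZ] at this
    simp only [map_smul, LinearMap.smul_apply, smul_eq_mul] at this
    have e1 : K X Z Y W = - c := by rw [hc, hanti1 X Z Y W]
    have e2 : K Z Y X W = - b := by rw [hb, hanti1 Z Y X W]
    have e3 : K Y X Z W = - a := by rw [ha, hanti1 Y X Z W]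
    rw [e1, e2, e3] at this
    linarith
  -- eliminate c and solve
  have key : ((lam - nu) ^ 2 - (lam - nu) * (mu - nu) + (mu - nu) ^ 2) * a = 0 := by
    linear_combination (lam - nu) * h2 + (mu - nu) * h3
      - ((lam - nu) * nu + (mu - nu) * lam) * h1
  have hx : lam - nu ≠ 0 := sub_ne_zero.mpr hln
  have hy : mu - nu ≠ 0 := sub_ne_zero.mpr hmn
  have hpos : ((lam - nu) ^ 2 - (lam - nu) * (mu - nu) + (mu - nu) ^ 2) ≠ 0 := by
    have h1' : (lam - nu) ^ 2 > 0 := by positivity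
    nlinarith [sq_nonneg (lam - nu - (mu - nu)), sq_nonneg (mu - nu)]
  exact (mul_eq_zero.mp key).resolve_left hpos
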